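/- Let p be a design on N ≥ 2 units satisfying positivity, and set c_i = (1 − π_i)·Y_i(1) + π_i·Y_i(0). Then Var(τ̂) = ψ(c), where for x ∈ ℝ^N, ψ(x) = (1/N²)·Σ_w p_w·(Σ_{i : w_i = 1} x_i/π_i − Σ_{i : w_i = 0} x_i/(1 − π_i))². Moreover, ψ : ℝ^N → ℝ is convex. -/

import Mathlib

open Finset

noncomputable section

/-- Propensity score `π_i = Pr(W_i = 1)` of a design `p` on `N` units. -/
def piS (N : ℕ) (p : (Fin N → Bool) → ℝ) (i : Fin N) : ℝ :=
  ∑ w : Fin N → Bool, if w i then p w else 0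

/-- Expectation under the design. -/
def expct (N : ℕ) (p f : (Fin N → Bool) → ℝ) : ℝ :=
  ∑ w : Fin N → Bool, p w * f w

/-- Average treatment effect. -/
def tauATE (N : ℕ) (Y1 Y0 : Fin N → ℝ) : ℝ :=
  (1 / (N : ℝ)) * ∑ i, (Y1 i - Y0 i)

/-- Horvitz–Thompson estimator. -/
def tauHT (N : ℕ) (p : (Fin N → Bool) → ℝ) (Y1 Y0 : Fin N → ℝ) (w : Fin N → Bool) : ℝ :=
  (1 / (N : ℝ)) * (∑ i, if w i then Y1 i / piS N p i else 0)
    - (1 / (N : ℝ)) * (∑ i, if w i then 0 else Y0 i / (1 - piS N p i))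

/-- Design-based variance of the Horvitz–Thompson estimator. -/
def varHT (N : ℕ) (p : (Fin N → Bool) → ℝ) (Y1 Y0 : Fin N → ℝ) : ℝ :=
  expct N p (fun w => (tauHT N p Y1 Y0 w - tauATE N Y1 Y0) ^ 2)

/-- `ψ(x) = (1/N²)·Σ_w p_w·(Σ_{w_i=1} x_i/π_i − Σ_{w_i=0} x_i/(1 − π_i))²`. -/
def psiGen (N : ℕ) (p : (Fin N → Bool) → ℝ) (x : Fin N → ℝ) : ℝ :=
  (1 / (N : ℝ) ^ 2) * ∑ w : Fin N → Bool, p w *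
    ((∑ i, if w i then x i / piS N p i else 0)
      - ∑ i, if w i then 0 else x i / (1 - piS N p i)) ^ 2

/-- Auxiliary linear map `x ↦ ∑ i, a i * x i`. -/
noncomputable def lmapAux (N : ℕ) (a : Fin N → ℝ) : (Fin N → ℝ) →ₗ[ℝ] ℝ where
  toFun x := ∑ i, a i * x i
  map_add' x y := by simp [mul_add, Finset.sum_add_distrib]
  map_smul' c x := by simp [Finset.mul_sum]; ring_nf; simp [mul_comm, mul_left_comm]

lemma convexOn_finsetSum {E : Type*} [AddCommGroup E] [Module ℝ E]
    {ι : Type*} (t : Finset ι) (f : ι → E → ℝ)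
    (h : ∀ w ∈ t, ConvexOn ℝ Set.univ (f w)) :
    ConvexOn ℝ Set.univ (fun x => ∑ w ∈ t, f w x) := by
  classical
  induction t using Finset.cons_induction with
  | empty => simpa using convexOn_const (0:ℝ) convex_univ
  | cons w t hw ih =>
      simp only [Finset.sum_cons]
      exact (h w (Finset.mem_cons_self w t)).add
        (ih fun v hv => h v (Finset.mem_cons_of_mem hv))

theorem variance_as_psiGen_and_convexity
    (N : ℕ) (hN : 2 ≤ N)
    (p : (Fin N → Bool) → ℝ) (hp : ∀ w, 0 ≤ p w)
    (hsum : ∑ w : Fin N → Bool, p w = 1)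
    (hpos : ∀ i, 0 < piS N p i ∧ piS N p i < 1)
    (Y1 Y0 : Fin N → ℝ) :
    varHT N p Y1 Y0 =
        psiGen N p (fun i => (1 - piS N p i) * Y1 i + piS N p i * Y0 i) ∧
      ConvexOn ℝ Set.univ (psiGen N p) := by
  have hNne : (N:ℝ) ≠ 0 := by positivity
  set c : Fin N → ℝ := fun i => (1 - piS N p i) * Y1 i + piS N p i * Y0 i with hc
  have key : ∀ w : Fin N → Bool, tauHT N p Y1 Y0 w - tauATE N Y1 Y0
      = (1/(N:ℝ)) * ((∑ i, if w i then c i / piS N p i else 0)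
        - ∑ i, if w i then 0 else c i / (1 - piS N p i)) := by
    intro w
    unfold tauHT tauATE
    rw [← mul_sub, ← mul_sub]
    congr 1
    rw [sub_sub, ← Finset.sum_add_distrib, ← Finset.sum_sub_distrib, ← Finset.sum_sub_distrib]
    refine Finset.sum_congr rfl fun i _ => ?_
    have h1 := (hpos i).1
    have h2 := (hpos i).2
    have hne : piS N p i ≠ 0 := ne_of_gt h1
    have hne2 : 1 - piS N p i ≠ 0 := by linarith
    by_cases hwi : w i <;> simp only [hc, hwi, if_true, if_false, Bool.false_eq_true] <;> field_simp <;> ring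
  constructor
  · unfold varHT expct psiGen
    rw [Finset.mul_sum]
    refine Finset.sum_congr rfl fun w _ => ?_
    simp only []
    rw [key w]
    ring
  · have heq : psiGen N p = fun x => (1/(N:ℝ)^2) • ∑ w : Fin N → Bool,
        p w • ((lmapAux N (fun i => if w i then (piS N p i)⁻¹ else -(1 - piS N p i)⁻¹)) x) ^ 2 := by
      funext x
      unfold psiGen
      rw [smul_eq_mul]
      congr 1
      refine Finset.sum_congr rfl fun w _ => ?_
      rw [smul_eq_mul]
      congr 2
      show _ = ∑ i, (if w i then (piS N p i)⁻¹ else -(1 - piS N p i)⁻¹) * x i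
      rw [← Finset.sum_sub_distrib]
      refine Finset.sum_congr rfl fun i _ => ?_
      by_cases hwi : w i <;> simp [hwi, div_eq_mul_inv] <;> ring
    rw [heq]
    refine ConvexOn.smul (by positivity) ?_
    refine convexOn_finsetSum Finset.univ _ fun w _ => ?_
    exact ConvexOn.smul (hp w)
      ((Even.convexOn_pow even_two).comp_linearMap
        (lmapAux N (fun i => if w i then (piS N p i)⁻¹ else -(1 - piS N p i)⁻¹)))
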